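/- The matrix identity B(⟨B⟩ᵀB + Bᵀ⟨B⟩)Bᵀ = diag(2, 0, 0, …, 0) holds; that is, B(⟨B⟩ᵀB + Bᵀ⟨B⟩)Bᵀ = 2·e₁e₁ᵀ, where e₁ is the first standard basis vector of ℝ^N. -/

import Mathlib

open Matrix MeasureTheory Real

/-- The N×N matrix with 1 on the diagonal and -1 on the first superdiagonal. -/
noncomputable def Bmat (N : ℕ) : Matrix (Fin N) (Fin N) ℝ :=
  Matrix.of fun i j => if j = i then 1 else if (j : ℕ) = (i : ℕ) + 1 then -1 else 0

/-- Entrywise absolute value of `Bmat N`. -/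
noncomputable def absB (N : ℕ) : Matrix (Fin N) (Fin N) ℝ :=
  Matrix.of fun i j => |Bmat N i j|

/-- Euclidean norm of a vector in ℝ^N. -/
noncomputable def norm2 {N : ℕ} (x : Fin N → ℝ) : ℝ := Real.sqrt (x ⬝ᵥ x)

/-- The Hamiltonian H(p, Δ) = ½(p − v₀M𝟙)ᵀ M⁻¹ (p − v₀M𝟙) + ½ Δᵀ A Δ. -/
noncomputable def Ham {N : ℕ} (v0 : ℝ) (m a : Fin N → ℝ) (p Δ : Fin N → ℝ) : ℝ :=
  (1/2) * ((p - v0 • (Matrix.diagonal m *ᵥ fun _ => 1)) ⬝ᵥ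
      (Matrix.diagonal (fun i => (m i)⁻¹) *ᵥ (p - v0 • (Matrix.diagonal m *ᵥ fun _ => 1)))) +
  (1/2) * (Δ ⬝ᵥ (Matrix.diagonal a *ᵥ Δ))

noncomputable def Smat (N : ℕ) : Matrix (Fin N) (Fin N) ℝ :=
  Matrix.of fun i j => if (j : ℕ) = (i : ℕ) + 1 then 1 else 0

lemma hB (N : ℕ) : Bmat N = 1 - Smat N := by
  ext i j
  simp only [Bmat, Smat, Matrix.of_apply, Matrix.sub_apply, Matrix.one_apply, Fin.ext_iff]
  split_ifs <;> first | omega | norm_num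

lemma habs (N : ℕ) : absB N = 1 + Smat N := by
  ext i j
  simp only [absB, Bmat, Smat, Matrix.of_apply, Matrix.add_apply, Matrix.one_apply, Fin.ext_iff]
  split_ifs <;> first | omega | norm_num

lemma StS (N : ℕ) : (Smat N)ᵀ * (Smat N)
    = Matrix.of (fun i j : Fin N => if i = j ∧ (i:ℕ) ≠ 0 then (1:ℝ) else 0) := by
  ext i j
  simp only [Matrix.mul_apply, Matrix.transpose_apply, Smat, Matrix.of_apply]
  by_cases hi : (i:ℕ) = 0
  · rw [Finset.sum_eq_zero]
    · simp [hi]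
    · intro k _
      rw [if_neg (by omega)]; ring
  · obtain ⟨m, hm⟩ : ∃ m : Fin N, (i:ℕ) = (m:ℕ)+1 :=
      ⟨⟨(i:ℕ)-1, by omega⟩, by simp; omega⟩
    rw [Finset.sum_eq_single m]
    · rw [if_pos hm, one_mul]
      simp only [Fin.ext_iff]
      split_ifs <;> first | rfl | omega
    · intro k _ hk
      rw [if_neg (fun h => hk (Fin.ext (by omega)))]; ring
    · intro h; exact absurd (Finset.mem_univ m) h

lemma key (N : ℕ) (hN : 0 < N) :
    (absB N)ᵀ * Bmat N + (Bmat N)ᵀ * absB N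
      = Matrix.single (⟨0, hN⟩ : Fin N) (⟨0, hN⟩ : Fin N) (2 : ℝ) := by
  rw [hB, habs]
  have h2 : (1 + Smat N)ᵀ * (1 - Smat N) + (1 - Smat N)ᵀ * (1 + Smat N)
      = 2 • (1 - (Smat N)ᵀ * Smat N) := by
    simp only [Matrix.transpose_add, Matrix.transpose_sub, Matrix.transpose_one]
    noncomm_ring
  rw [h2, StS]
  ext i j
  simp only [Matrix.smul_apply, Matrix.sub_apply, Matrix.one_apply, Matrix.of_apply,
    Matrix.single, smul_eq_mul]
  by_cases hi : (⟨0, hN⟩ : Fin N) = i <;> by_cases hj : (⟨0, hN⟩ : Fin N) = j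
  · simp [← hi, ← hj]
  · simp [← hi, hj]
  · simp [← hj, hi, Ne.symm hi]
  · have hj0 : (j:ℕ) ≠ 0 := fun h => hj (Fin.ext h.symm)
    by_cases hij : i = j <;> simp [hij, hi, hj, hj0, Ne.symm hi, Ne.symm hj]

lemma hBE (N : ℕ) (hN : 0 < N) :
    Bmat N * Matrix.single (⟨0, hN⟩ : Fin N) (⟨0, hN⟩ : Fin N) (2 : ℝ)
      = Matrix.single (⟨0, hN⟩ : Fin N) (⟨0, hN⟩ : Fin N) (2 : ℝ) := by
  ext i j
  simp only [Matrix.mul_apply, Matrix.single, Matrix.of_apply, Bmat]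
  rw [Finset.sum_eq_single (⟨0, hN⟩ : Fin N)]
  · have h0 : ¬ (((⟨0, hN⟩ : Fin N)) : ℕ) = (i:ℕ) + 1 := by simp
    by_cases hi : (⟨0, hN⟩ : Fin N) = i <;> by_cases hj : (⟨0, hN⟩ : Fin N) = j <;>
      simp [hi, hj, h0]
  · intro k _ hk
    have hz : (if (⟨0, hN⟩ : Fin N) = k ∧ (⟨0, hN⟩ : Fin N) = j then (2:ℝ) else 0) = 0 :=
      if_neg (fun h => hk h.1.symm)
    rw [hz, mul_zero]
  · intro h; exact absurd (Finset.mem_univ _) h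

lemma hEBt (N : ℕ) (hN : 0 < N) :
    Matrix.single (⟨0, hN⟩ : Fin N) (⟨0, hN⟩ : Fin N) (2 : ℝ) * (Bmat N)ᵀ
      = Matrix.single (⟨0, hN⟩ : Fin N) (⟨0, hN⟩ : Fin N) (2 : ℝ) := by
  ext i j
  simp only [Matrix.mul_apply, Matrix.transpose_apply, Matrix.single,
    Matrix.of_apply, Bmat]
  rw [Finset.sum_eq_single (⟨0, hN⟩ : Fin N)]
  · have h0 : ¬ (((⟨0, hN⟩ : Fin N)) : ℕ) = (j:ℕ) + 1 := by simp
    by_cases hi : (⟨0, hN⟩ : Fin N) = i <;> by_cases hj : (⟨0, hN⟩ : Fin N) = j <;>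
      simp [hi, hj, h0]
  · intro k _ hk
    have hz : (if (⟨0, hN⟩ : Fin N) = i ∧ (⟨0, hN⟩ : Fin N) = k then (2:ℝ) else 0) = 0 :=
      if_neg (fun h => hk h.2.symm)
    rw [hz, zero_mul]
  · intro h; exact absurd (Finset.mem_univ _) h


/-- B(⟨B⟩ᵀB + Bᵀ⟨B⟩)Bᵀ = diag(2, 0, …, 0) = 2·e₁e₁ᵀ. -/
theorem stmt_7 (N : ℕ) (hN : 0 < N) :
    Bmat N * ((absB N)ᵀ * Bmat N + (Bmat N)ᵀ * absB N) * (Bmat N)ᵀ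
      = Matrix.single (⟨0, hN⟩ : Fin N) (⟨0, hN⟩ : Fin N) (2 : ℝ) := by
  rw [key N hN, hBE N hN, hEBt N hN]
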